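/- arXiv:2003.06578 — 2 statements merged into one kernel-verified Lean document; each statement's English description precedes it below -/
import Mathlib

section
/- For $s>0$ set $\eta_1=\sinh^2 s/s^2$, $\eta_2=\sinh(2s)/(2s)$, and define for $x>0$: $g_1(x)=\frac{xe^{-x}\cosh x-x^2\eta_2+x^3\eta_1}{\sinh 2x+2x\eta_2}$, $g_2(x)=\frac{x}{\sinh 2x+2x\eta_2}$, $g_3(x)=\frac{x^2e^{-x}\cosh x-x^3\eta_2+x^2s^2\eta_1}{\sinh 2x+2x\eta_2}$, $g_4(x)=\frac{e^{-x}\sinh x+x\eta_2}{\sinh 2x+2x\eta_2}$. There exist constants $C>0$ and $s_0>0$ such that for all $0<s<s_0$, all $x>0$, and all $j\in\{1,2,3,4\}$: $|g_j(x)|+|g_j'(x)|+|g_j''(x)|\le C(1+x^3)e^{-2x}$. -/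
open Real

noncomputable section

namespace StokesPaper

/-- `η₁(s) = sinh²s / s²`. -/
def η1 (s : ℝ) : ℝ := Real.sinh s ^ 2 / s ^ 2

/-- `η₂(s) = sinh(2s)/(2s)`. -/
def η2 (s : ℝ) : ℝ := Real.sinh (2 * s) / (2 * s)

/-- `g₁(x) = (x e^{-x} cosh x - x² η₂ + x³ η₁)/(sinh 2x + 2x η₂)`. -/
def g1 (s x : ℝ) : ℝ :=
  (x * Real.exp (-x) * Real.cosh x - x ^ 2 * η2 s + x ^ 3 * η1 s) /
    (Real.sinh (2 * x) + 2 * x * η2 s)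

/-- `g₂(x) = x/(sinh 2x + 2x η₂)`. -/
def g2 (s x : ℝ) : ℝ := x / (Real.sinh (2 * x) + 2 * x * η2 s)

/-- `g₃(x) = (x² e^{-x} cosh x - x³ η₂ + x² s² η₁)/(sinh 2x + 2x η₂)`. -/
def g3 (s x : ℝ) : ℝ :=
  (x ^ 2 * Real.exp (-x) * Real.cosh x - x ^ 3 * η2 s + x ^ 2 * s ^ 2 * η1 s) /
    (Real.sinh (2 * x) + 2 * x * η2 s)

/-- `g₄(x) = (e^{-x} sinh x + x η₂)/(sinh 2x + 2x η₂)`. -/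
def g4 (s x : ℝ) : ℝ :=
  (Real.exp (-x) * Real.sinh x + x * η2 s) / (Real.sinh (2 * x) + 2 * x * η2 s)


open Set

section Helpers


/-- MVT helper: if F 0 = 0 and |F'| ≤ C on [0,x], then |F x| ≤ C * x. -/
lemma mvt_abs {F F' : ℝ → ℝ} {x C : ℝ} (hx : 0 ≤ x)
    (hF : ∀ t ∈ Icc (0:ℝ) x, HasDerivAt F (F' t) t)
    (hC : ∀ t ∈ Icc (0:ℝ) x, |F' t| ≤ C)
    (h0 : F 0 = 0) : |F x| ≤ C * x := by
  have := (convex_Icc (0:ℝ) x).norm_image_sub_le_of_norm_hasDerivWithin_le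
    (f' := F') (fun t ht => (hF t ht).hasDerivWithinAt)
    (fun t ht => by simpa [Real.norm_eq_abs] using hC t ht)
    (Set.left_mem_Icc.2 hx) (Set.right_mem_Icc.2 hx)
  simpa [Real.norm_eq_abs, h0, abs_of_nonneg hx] using this

lemma self_le_sinh {x : ℝ} (hx : 0 ≤ x) : x ≤ Real.sinh x := by
  rcases eq_or_lt_of_le hx with h | h
  · simp [← h]
  · exact (Real.self_lt_sinh_iff.2 h).le

lemma exp_one_lt : Real.exp 1 < 2.7182818286 := Real.exp_one_lt_d9

lemma exp_two_lt : Real.exp 2 < 7.4 := by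
  have h := Real.exp_one_lt_d9
  have h2 : Real.exp 2 = Real.exp 1 * Real.exp 1 := by
    rw [← Real.exp_add]; norm_num
  rw [h2]
  nlinarith [Real.exp_pos 1]

lemma cosh_two_le : Real.cosh 2 ≤ 3.8 := by
  rw [Real.cosh_eq]
  have h1 : Real.exp 2 < 7.4 := exp_two_lt
  have h2 : Real.exp (-2) ≤ 0.15 := by
    rw [Real.exp_neg]
    rw [inv_le_comm₀ (Real.exp_pos 2) (by norm_num)]
    nlinarith [Real.exp_one_gt_d9, Real.exp_add 1 1, Real.exp_pos 1,
      (by rw [← Real.exp_add]; norm_num : Real.exp 2 = Real.exp 1 * Real.exp 1)]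
  have h3 : 0 < Real.exp (-2) := Real.exp_pos _
  linarith

lemma sinh_le_mul {s : ℝ} (hs0 : 0 ≤ s) (hs1 : s ≤ 1) : Real.sinh s ≤ 1.6 * s := by
  have h : |Real.sinh s - s| ≤ 0.6 * s := by
    apply mvt_abs hs0 (F := fun t => Real.sinh t - t) (F' := fun t => Real.cosh t - 1)
    · intro t ht
      exact (Real.hasDerivAt_sinh t).sub (hasDerivAt_id t)
    · intro t ht
      have h1 : Real.cosh t ≤ Real.cosh 1 := by
        rw [Real.cosh_le_cosh]
        rw [abs_of_nonneg ht.1, abs_of_nonneg (by norm_num : (0:ℝ) ≤ 1)]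
        exact ht.2.trans hs1
      have h2 : Real.cosh 1 ≤ 1.6 := by
        rw [Real.cosh_eq]
        have := Real.exp_one_lt_d9
        have h3 : Real.exp (-1) ≤ 0.37 := by
          rw [Real.exp_neg]
          rw [inv_le_comm₀ ((Real.exp_pos 1)) (by norm_num)]
          have := Real.exp_one_gt_d9
          linarith
        linarith
      have h0 : 1 ≤ Real.cosh t := Real.one_le_cosh t
      rw [abs_of_nonneg (by linarith)]
      linarith
    · simp
  have := abs_le.1 h
  linarith [this.2]

lemma sinh_2s_le {s : ℝ} (hs0 : 0 ≤ s) (hs1 : s ≤ 1) : Real.sinh (2*s) ≤ 8 * s := by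
  have h : |Real.sinh (2*s) - 2*s| ≤ 5.6 * s := by
    apply mvt_abs hs0 (F := fun t => Real.sinh (2*t) - 2*t) (F' := fun t => 2*Real.cosh (2*t) - 2)
    · intro t ht
      have h1 := (((hasDerivAt_id t).const_mul (2:ℝ)).sinh).sub ((hasDerivAt_id t).const_mul (2:ℝ))
      convert h1 using 1
      · rfl
      · rfl
      · rfl
      simp only [id_eq, mul_one]
      ring
    · intro t ht
      have h1 : Real.cosh (2*t) ≤ Real.cosh 2 := by
        rw [Real.cosh_le_cosh]
        rw [abs_of_nonneg (by linarith [ht.1]), abs_of_nonneg (by norm_num : (0:ℝ) ≤ 2)]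
        linarith [ht.2.trans hs1]
      have h0 : 1 ≤ Real.cosh (2*t) := Real.one_le_cosh _
      rw [abs_of_nonneg (by linarith)]
      linarith [cosh_two_le]
    · simp
  have := abs_le.1 h
  linarith [this.2]

/-- η₂ bounds for 0 < s < 1. -/
lemma eta2_bounds {s : ℝ} (hs : 0 < s) (hs1 : s < 1) :
    1 ≤ Real.sinh (2*s) / (2*s) ∧ Real.sinh (2*s) / (2*s) ≤ 4 := by
  constructor
  · rw [le_div_iff₀ (by linarith)]
    simpa using self_le_sinh (by linarith : (0:ℝ) ≤ 2*s)
  · rw [div_le_iff₀ (by linarith)]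
    have := sinh_2s_le hs.le hs1.le
    nlinarith

lemma eta1_bounds {s : ℝ} (hs : 0 < s) (hs1 : s < 1) :
    0 ≤ Real.sinh s ^ 2 / s ^ 2 ∧ Real.sinh s ^ 2 / s ^ 2 ≤ 3 := by
  constructor
  · positivity
  · rw [div_le_iff₀ (by positivity)]
    have h1 := sinh_le_mul hs.le hs1.le
    have h2 : 0 ≤ Real.sinh s := Real.sinh_nonneg_iff.2 hs.le
    nlinarith

lemma sinh_sq_le {s : ℝ} (hs : 0 < s) (hs1 : s < 1) : Real.sinh s ^ 2 ≤ 3 := by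
  have h1 := sinh_le_mul hs.le hs1.le
  have h2 : 0 ≤ Real.sinh s := Real.sinh_nonneg_iff.2 hs.le
  nlinarith



noncomputable def Qf (c y : ℝ) : ℝ := Real.sinh (2*y)/y + 2*c
noncomputable def Qd (y : ℝ) : ℝ := (2*y*Real.cosh (2*y) - Real.sinh (2*y))/y^2
noncomputable def Qdd (y : ℝ) : ℝ :=
  (4*y^2*Real.sinh (2*y) - 4*y*Real.cosh (2*y) + 2*Real.sinh (2*y))/y^3

lemma hasDerivAt_Qf (c : ℝ) {y : ℝ} (hy : y ≠ 0) : HasDerivAt (Qf c) (Qd y) y := by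
  have h1 := (((hasDerivAt_id y).const_mul (2:ℝ)).sinh.div (hasDerivAt_id y) hy).add_const (2*c)
  convert h1 using 1
  · rfl
  · rfl
  · rfl
  unfold Qd
  all_goals simp only [id_eq, mul_one]
  all_goals try ring

lemma hasDerivAt_Qd {y : ℝ} (hy : y ≠ 0) : HasDerivAt Qd (Qdd y) y := by
  have hn : HasDerivAt (fun t : ℝ => 2*t*Real.cosh (2*t) - Real.sinh (2*t))
      (2*Real.cosh (2*y) + 2*y*(Real.sinh (2*y)*2) - Real.cosh (2*y)*2) y := by
    have h1 := (((hasDerivAt_id y).const_mul (2:ℝ)).mul (((hasDerivAt_id y).const_mul (2:ℝ)).cosh)).sub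
      (((hasDerivAt_id y).const_mul (2:ℝ)).sinh)
    convert h1 using 1
    · rfl
    · rfl
    · rfl
    all_goals simp only [id_eq, mul_one]
    all_goals try ring
  have hd := hn.div (hasDerivAt_pow 2 y) (pow_ne_zero 2 hy)
  convert hd using 1
  · rfl
  · rfl
  · rfl
  unfold Qdd
  simp only [Nat.cast_ofNat, pow_one]
  field_simp
  ring

lemma sinh2_mono {t x : ℝ} (ht0 : 0 ≤ t) (htx : t ≤ x) : Real.sinh (2*t) ≤ Real.sinh (2*x) :=
  Real.sinh_le_sinh.2 (by linarith)

lemma cosh2_mono {t x : ℝ} (ht0 : 0 ≤ t) (htx : t ≤ x) : Real.cosh (2*t) ≤ Real.cosh (2*x) := by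
  rw [Real.cosh_le_cosh, abs_of_nonneg (by linarith), abs_of_nonneg (by linarith)]
  linarith

lemma fQ_small {x : ℝ} (hx : 0 < x) :
    |2*x*Real.cosh (2*x) - Real.sinh (2*x)| ≤ 4*x*Real.sinh (2*x) * x := by
  apply mvt_abs hx.le (F' := fun t => 2*Real.cosh (2*t) + 2*t*(Real.sinh (2*t)*2) - Real.cosh (2*t)*2)
  · intro t ht
    have h1 := (((hasDerivAt_id t).const_mul (2:ℝ)).mul (((hasDerivAt_id t).const_mul (2:ℝ)).cosh)).sub
      (((hasDerivAt_id t).const_mul (2:ℝ)).sinh)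
    convert h1 using 1
    · rfl
    · rfl
    · rfl
    all_goals simp only [id_eq, mul_one]
    all_goals try ring
  · intro t ht
    have he : 2*Real.cosh (2*t) + 2*t*(Real.sinh (2*t)*2) - Real.cosh (2*t)*2
        = 4*t*Real.sinh (2*t) := by ring
    have hs : 0 ≤ Real.sinh (2*t) := Real.sinh_nonneg_iff.2 (by linarith [ht.1])
    rw [he, abs_of_nonneg (mul_nonneg (by linarith [ht.1]) hs)]
    have h2 := sinh2_mono ht.1 ht.2
    nlinarith [ht.1, ht.2]
  · simp

lemma F2_small {x : ℝ} (hx : 0 < x) :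
    |4*x^2*Real.sinh (2*x) - 4*x*Real.cosh (2*x) + 2*Real.sinh (2*x)|
      ≤ 8*x^2*Real.cosh (2*x) * x := by
  apply mvt_abs hx.le (F' := fun t => (8*t*Real.sinh (2*t) + 4*t^2*(Real.cosh (2*t)*2))
      - (4*Real.cosh (2*t) + 4*t*(Real.sinh (2*t)*2)) + 2*(Real.cosh (2*t)*2))
  · intro t ht
    have ha : HasDerivAt (fun t : ℝ => 4*t^2*Real.sinh (2*t))
        (8*t*Real.sinh (2*t) + 4*t^2*(Real.cosh (2*t)*2)) t := by
      have h1 := (((hasDerivAt_pow 2 t).const_mul (4:ℝ)).mul (((hasDerivAt_id t).const_mul (2:ℝ)).sinh))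
      convert h1 using 1
      · rfl
      · rfl
      · rfl
      all_goals simp only [id_eq, mul_one, pow_one, Nat.cast_ofNat]
      all_goals try ring
    have hb : HasDerivAt (fun t : ℝ => 4*t*Real.cosh (2*t))
        (4*Real.cosh (2*t) + 4*t*(Real.sinh (2*t)*2)) t := by
      have h1 := (((hasDerivAt_id t).const_mul (4:ℝ)).mul (((hasDerivAt_id t).const_mul (2:ℝ)).cosh))
      convert h1 using 1
      · rfl
      · rfl
      · rfl
      all_goals simp only [id_eq, mul_one]
      all_goals try ring
    have hc : HasDerivAt (fun t : ℝ => 2*Real.sinh (2*t)) (2*(Real.cosh (2*t)*2)) t := by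
      have h1 := ((((hasDerivAt_id t).const_mul (2:ℝ)).sinh).const_mul (2:ℝ))
      convert h1 using 1
      · rfl
      · rfl
      · rfl
      all_goals simp only [id_eq, mul_one]
      all_goals try ring
    exact (ha.sub hb).add hc
  · intro t ht
    have he : (8*t*Real.sinh (2*t) + 4*t^2*(Real.cosh (2*t)*2))
      - (4*Real.cosh (2*t) + 4*t*(Real.sinh (2*t)*2)) + 2*(Real.cosh (2*t)*2)
        = 8*t^2*Real.cosh (2*t) := by ring
    have hc1 : (1:ℝ) ≤ Real.cosh (2*t) := Real.one_le_cosh _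
    rw [he, abs_of_nonneg (by nlinarith [sq_nonneg t])]
    have h2 := cosh2_mono ht.1 ht.2
    have hc2 : (1:ℝ) ≤ Real.cosh (2*x) := Real.one_le_cosh _
    calc 8*t^2*Real.cosh (2*t) ≤ 8*t^2*Real.cosh (2*x) := by nlinarith [sq_nonneg t]
      _ ≤ 8*x^2*Real.cosh (2*x) := by
          nlinarith [mul_le_mul_of_nonneg_right
            (by nlinarith [ht.1, ht.2] : t^2 ≤ x^2) (by linarith : (0:ℝ) ≤ Real.cosh (2*x))]
  · simp

-- ‖Now the main Q bounds‖ (assume 1 ≤ c ≤ 4)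
lemma Qf_pos {c x : ℝ} (hc : 1 ≤ c) (hx : 0 < x) : 0 < Qf c x := by
  unfold Qf
  have h1 : 0 < Real.sinh (2*x) := Real.sinh_pos_iff.2 (by linarith)
  have : 0 < Real.sinh (2*x)/x := by positivity
  linarith

lemma Qf_ge {c x : ℝ} (hc : 1 ≤ c) (hx : 0 < x) :
    Real.sinh (2*x)/x + 2 ≤ Qf c x := by
  unfold Qf; linarith

lemma Qf_ge_four {c x : ℝ} (hc : 1 ≤ c) (hx : 0 < x) : 4 ≤ Qf c x := by
  have h1 : 2*x ≤ Real.sinh (2*x) := by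
    have := Real.self_lt_sinh_iff.2 (by linarith : (0:ℝ) < 2*x)
    linarith
  have h2 : 2 ≤ Real.sinh (2*x)/x := by
    rw [le_div_iff₀ hx]; linarith
  have := Qf_ge hc hx
  linarith

lemma Qf_exp_low {c x : ℝ} (hc : 1 ≤ c) (hx : 0 < x) :
    Real.exp (2*x) ≤ 4*(1+x)*(Qf c x) := by
  have key : x * Real.exp (2*x) ≤ 4*(1+x)*(Real.sinh (2*x) + 2*x) := by
    rw [Real.sinh_eq]
    have hE : 1 + 2*x ≤ Real.exp (2*x) := by
      linarith [Real.add_one_le_exp (2*x)]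
    have hE2 : Real.exp (-(2*x)) ≤ 1 := by
      rw [Real.exp_le_one_iff]; linarith
    have hE3 : 0 < Real.exp (-(2*x)) := Real.exp_pos _
    nlinarith [sq_nonneg x]
  have hQ : Real.sinh (2*x) + 2*x ≤ x * Qf c x := by
    have := Qf_ge hc hx
    have h1 : Real.sinh (2*x) + 2*x = x * (Real.sinh (2*x)/x + 2) := by
      field_simp
    rw [h1]
    nlinarith [Qf_ge hc hx]
  have h3 : x * Real.exp (2*x) ≤ x * (4*(1+x)*Qf c x) := by nlinarith
  exact le_of_mul_le_mul_left (by linarith) hx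

lemma xQf {c x : ℝ} (hx : x ≠ 0) : x * Qf c x = Real.sinh (2*x) + 2*c*x := by
  unfold Qf; field_simp; try ring

lemma Qd_le {c x : ℝ} (hc : 1 ≤ c) (hx : 0 < x) : |Qd x| ≤ 4 * Qf c x := by
  have hs : 0 ≤ Real.sinh (2*x) := Real.sinh_nonneg_iff.2 (by linarith)
  have hcs : Real.cosh (2*x) = Real.sinh (2*x) + Real.exp (-(2*x)) := by
    have := Real.cosh_sub_sinh (2*x); linarith
  have he1 : Real.exp (-(2*x)) ≤ 1 := by rw [Real.exp_le_one_iff]; linarith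
  have he0 : 0 < Real.exp (-(2*x)) := Real.exp_pos _
  have hf : |2*x*Real.cosh (2*x) - Real.sinh (2*x)| ≤ 4*x*(Real.sinh (2*x) + 2*c*x) := by
    rcases le_total x 1 with h1 | h1
    · have h2 := fQ_small hx
      nlinarith [mul_nonneg (mul_nonneg hx.le hs) (by linarith : (0:ℝ) ≤ 1-x),
        mul_nonneg (by linarith : (0:ℝ) ≤ c-1) (sq_nonneg x), sq_nonneg x]
    · have h2 : (0:ℝ) ≤ 2*x*Real.cosh (2*x) := by
        have := Real.one_le_cosh (2*x); nlinarith
      have htri : |2*x*Real.cosh (2*x) - Real.sinh (2*x)|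
          ≤ 2*x*Real.cosh (2*x) + Real.sinh (2*x) := by
        calc |2*x*Real.cosh (2*x) - Real.sinh (2*x)|
            ≤ |2*x*Real.cosh (2*x)| + |Real.sinh (2*x)| := abs_sub _ _
          _ = 2*x*Real.cosh (2*x) + Real.sinh (2*x) := by
              rw [abs_of_nonneg h2, abs_of_nonneg hs]
      nlinarith [mul_nonneg (by linarith : (0:ℝ) ≤ 2*x-1) hs,
        mul_nonneg hx.le (by linarith : (0:ℝ) ≤ 4*x-1),
        mul_nonneg (by linarith : (0:ℝ) ≤ c-1) (sq_nonneg x),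
        mul_le_mul_of_nonneg_left he1 (by linarith : (0:ℝ) ≤ 2*x)]
  have heq : 4 * Qf c x * x^2 = 4*x*(Real.sinh (2*x) + 2*c*x) := by
    have h2 : 4 * Qf c x * x^2 = 4*x*(x * Qf c x) := by ring
    rw [h2, xQf hx.ne']
  unfold Qd
  rw [abs_div, abs_of_pos (by positivity : (0:ℝ) < x^2), div_le_iff₀ (by positivity : (0:ℝ) < x^2)]
  rw [heq]
  exact hf

lemma Qdd_le {c x : ℝ} (hc : 1 ≤ c) (hx : 0 < x) : |Qdd x| ≤ 16 * Qf c x := by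
  have hs : 0 ≤ Real.sinh (2*x) := Real.sinh_nonneg_iff.2 (by linarith)
  have hcs : Real.cosh (2*x) = Real.sinh (2*x) + Real.exp (-(2*x)) := by
    have := Real.cosh_sub_sinh (2*x); linarith
  have he1 : Real.exp (-(2*x)) ≤ 1 := by rw [Real.exp_le_one_iff]; linarith
  have he0 : 0 < Real.exp (-(2*x)) := Real.exp_pos _
  have hf : |4*x^2*Real.sinh (2*x) - 4*x*Real.cosh (2*x) + 2*Real.sinh (2*x)|
      ≤ 16*x^2*(Real.sinh (2*x) + 2*c*x) := by
    rcases le_total x 1 with h1 | h1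
    · have h2 := F2_small hx
      nlinarith [mul_nonneg (mul_nonneg (by positivity : (0:ℝ) ≤ 8*x^2) hs)
          (by linarith : (0:ℝ) ≤ 2-x),
        mul_nonneg (by linarith : (0:ℝ) ≤ c-1)
          (by positivity : (0:ℝ) ≤ x^3),
        mul_le_mul_of_nonneg_left he1 (by positivity : (0:ℝ) ≤ 8*x^3),
        pow_pos hx 3]
    · have h2 : (0:ℝ) ≤ 4*x*Real.cosh (2*x) := by
        have := Real.one_le_cosh (2*x); nlinarith
      have htri : |4*x^2*Real.sinh (2*x) - 4*x*Real.cosh (2*x) + 2*Real.sinh (2*x)|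
          ≤ 4*x^2*Real.sinh (2*x) + 4*x*Real.cosh (2*x) + 2*Real.sinh (2*x) := by
        calc |4*x^2*Real.sinh (2*x) - 4*x*Real.cosh (2*x) + 2*Real.sinh (2*x)|
            ≤ |4*x^2*Real.sinh (2*x) - 4*x*Real.cosh (2*x)| + |2*Real.sinh (2*x)| := abs_add_le _ _
          _ ≤ |4*x^2*Real.sinh (2*x)| + |4*x*Real.cosh (2*x)| + |2*Real.sinh (2*x)| := by
              linarith [abs_sub (4*x^2*Real.sinh (2*x)) (4*x*Real.cosh (2*x))]
          _ = 4*x^2*Real.sinh (2*x) + 4*x*Real.cosh (2*x) + 2*Real.sinh (2*x) := by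
              rw [abs_of_nonneg (by positivity : (0:ℝ) ≤ 4*x^2*Real.sinh (2*x)),
                abs_of_nonneg h2, abs_of_nonneg (by linarith : (0:ℝ) ≤ 2*Real.sinh (2*x))]
      nlinarith [mul_nonneg hs (by nlinarith : (0:ℝ) ≤ 12*x^2-4*x-2),
        mul_nonneg hx.le (by nlinarith : (0:ℝ) ≤ 32*x^2-4),
        mul_nonneg (by linarith : (0:ℝ) ≤ c-1) (by positivity : (0:ℝ) ≤ x^3),
        mul_le_mul_of_nonneg_left he1 (by linarith : (0:ℝ) ≤ 4*x)]
  have heq : 16 * Qf c x * x^3 = 16*x^2*(Real.sinh (2*x) + 2*c*x) := by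
    have h2 : 16 * Qf c x * x^3 = 16*x^2*(x * Qf c x) := by ring
    rw [h2, xQf hx.ne']
  unfold Qdd
  rw [abs_div, abs_of_pos (by positivity : (0:ℝ) < x^3), div_le_iff₀ (by positivity : (0:ℝ) < x^3)]
  rw [heq]
  exact hf


set_option maxHeartbeats 1000000

lemma master {g P Pd Pdd Q Qd Qdd : ℝ → ℝ}
    (hg : ∀ y ∈ Ioi (0:ℝ), g y = P y / Q y)
    (hP : ∀ y ∈ Ioi (0:ℝ), HasDerivAt P (Pd y) y)
    (hPd : ∀ y ∈ Ioi (0:ℝ), HasDerivAt Pd (Pdd y) y)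
    (hQ : ∀ y ∈ Ioi (0:ℝ), HasDerivAt Q (Qd y) y)
    (hQd : ∀ y ∈ Ioi (0:ℝ), HasDerivAt Qd (Qdd y) y)
    (hQpos : ∀ y ∈ Ioi (0:ℝ), 0 < Q y)
    (hQlow : ∀ y ∈ Ioi (0:ℝ), Real.exp (2*y) ≤ 4*(1+y) * Q y)
    (hQdb : ∀ y ∈ Ioi (0:ℝ), |Qd y| ≤ 4 * Q y)
    (hQddb : ∀ y ∈ Ioi (0:ℝ), |Qdd y| ≤ 16 * Q y)
    (hP0 : ∀ y ∈ Ioi (0:ℝ), |P y| ≤ 20*(1+y^2))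
    (hP1 : ∀ y ∈ Ioi (0:ℝ), |Pd y| ≤ 20*(1+y))
    (hP2 : ∀ y ∈ Ioi (0:ℝ), |Pdd y| ≤ 20)
    {x : ℝ} (hx : x ∈ Ioi (0:ℝ)) :
    |g x| + |deriv g x| + |deriv (deriv g) x| ≤ 100000*(1+x^3)*Real.exp (-2*x) := by
  have hxpos : (0:ℝ) < x := hx
  have hq : 0 < Q x := hQpos x hx
  -- first derivative function
  set G1 : ℝ → ℝ := fun y => (Pd y * Q y - P y * Qd y) / (Q y * Q y) with hG1def
  have hG1 : ∀ y ∈ Ioi (0:ℝ), HasDerivAt (fun z => P z / Q z) (G1 y) y := by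
    intro y hy
    have h := (hP y hy).div (hQ y hy) (hQpos y hy).ne'
    convert h using 1
    · rfl
    · rfl
    · rfl
    simp only [hG1def]
    rw [← pow_two]
  have hderiv_all : ∀ y ∈ Ioi (0:ℝ), deriv g y = G1 y := by
    intro y hy
    have hev : g =ᶠ[nhds y] fun z => P z / Q z := by
      filter_upwards [isOpen_Ioi.mem_nhds hy] with z hz using hg z hz
    rw [hev.deriv_eq]
    exact (hG1 y hy).deriv
  have hd1 : deriv g x = G1 x := hderiv_all x hx
  -- second derivative
  have hnum : HasDerivAt (fun y => Pd y * Q y - P y * Qd y)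
      (Pdd x * Q x + Pd x * Qd x - (Pd x * Qd x + P x * Qdd x)) x :=
    ((hPd x hx).mul (hQ x hx)).sub ((hP x hx).mul (hQd x hx))
  have hden : HasDerivAt (fun y => Q y * Q y) (Qd x * Q x + Q x * Qd x) x :=
    (hQ x hx).mul (hQ x hx)
  have hG1' : HasDerivAt G1
      (((Pdd x * Q x + Pd x * Qd x - (Pd x * Qd x + P x * Qdd x)) * (Q x * Q x)
        - (Pd x * Q x - P x * Qd x) * (Qd x * Q x + Q x * Qd x)) / (Q x * Q x)^2) x :=
    hnum.div hden (by positivity)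
  have hd2 : deriv (deriv g) x
      = ((Pdd x * Q x + Pd x * Qd x - (Pd x * Qd x + P x * Qdd x)) * (Q x * Q x)
        - (Pd x * Q x - P x * Qd x) * (Qd x * Q x + Q x * Qd x)) / (Q x * Q x)^2 := by
    have hev2 : deriv g =ᶠ[nhds x] G1 := by
      filter_upwards [isOpen_Ioi.mem_nhds hx] with z hz using hderiv_all z hz
    rw [hev2.deriv_eq]
    exact hG1'.deriv
  -- bounds on abs values
  have ha := hP0 x hx
  have hb := hP1 x hx
  have hc := hP2 x hx
  have hdq := hQdb x hx
  have heq' := hQddb x hx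
  have han : 0 ≤ |P x| := abs_nonneg _
  have hbn : 0 ≤ |Pd x| := abs_nonneg _
  have hcn : 0 ≤ |Pdd x| := abs_nonneg _
  have hdn : 0 ≤ |Qd x| := abs_nonneg _
  have hen : 0 ≤ |Qdd x| := abs_nonneg _
  -- numerator A of first derivative
  have hA : |Pd x * Q x - P x * Qd x| ≤ (20*(1+x) + 80*(1+x^2)) * Q x := by
    calc |Pd x * Q x - P x * Qd x| ≤ |Pd x * Q x| + |P x * Qd x| := abs_sub _ _
      _ = |Pd x| * Q x + |P x| * |Qd x| := by rw [abs_mul, abs_mul, abs_of_pos hq]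
      _ ≤ (20*(1+x) + 80*(1+x^2)) * Q x := by
          nlinarith [mul_le_mul_of_nonneg_right hb hq.le,
            mul_le_mul_of_nonneg_left hdq han,
            mul_le_mul_of_nonneg_right ha (by linarith : (0:ℝ) ≤ 4 * Q x)]
  have hA' : |Pdd x * Q x - P x * Qdd x| ≤ (20 + 320*(1+x^2)) * Q x := by
    calc |Pdd x * Q x - P x * Qdd x| ≤ |Pdd x * Q x| + |P x * Qdd x| := abs_sub _ _
      _ = |Pdd x| * Q x + |P x| * |Qdd x| := by rw [abs_mul, abs_mul, abs_of_pos hq]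
      _ ≤ (20 + 320*(1+x^2)) * Q x := by
          nlinarith [mul_le_mul_of_nonneg_right hc hq.le,
            mul_le_mul_of_nonneg_left heq' han,
            mul_le_mul_of_nonneg_right ha (by linarith : (0:ℝ) ≤ 16 * Q x)]
  -- |g x| ≤ B0 / Q x
  have hb0 : |g x| ≤ (20*(1+x^2)) / Q x := by
    rw [hg x hx, abs_div, abs_of_pos hq]
    gcongr
  have hb1 : |deriv g x| ≤ (20*(1+x) + 80*(1+x^2)) / Q x := by
    rw [hd1]
    simp only [hG1def]
    rw [abs_div, abs_of_pos (by positivity : (0:ℝ) < Q x * Q x),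
      div_le_iff₀ (by positivity : (0:ℝ) < Q x * Q x)]
    have heqq : (20*(1+x) + 80*(1+x^2)) / Q x * (Q x * Q x)
        = (20*(1+x) + 80*(1+x^2)) * Q x := by
      field_simp
    rw [heqq]
    exact hA
  have hb2 : |deriv (deriv g) x|
      ≤ (20 + 320*(1+x^2) + 8*(20*(1+x) + 80*(1+x^2))) / Q x := by
    rw [hd2]
    rw [abs_div, abs_of_pos (by positivity : (0:ℝ) < (Q x * Q x)^2),
      div_le_iff₀ (by positivity : (0:ℝ) < (Q x * Q x)^2)]
    have h1 : (Pdd x * Q x + Pd x * Qd x - (Pd x * Qd x + P x * Qdd x)) * (Q x * Q x)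
        - (Pd x * Q x - P x * Qd x) * (Qd x * Q x + Q x * Qd x)
        = (Pdd x * Q x - P x * Qdd x) * (Q x * Q x)
          - (Pd x * Q x - P x * Qd x) * (2 * Q x * Qd x) := by ring
    rw [h1]
    have e1 : |(Pdd x * Q x - P x * Qdd x) * (Q x * Q x)|
        = |Pdd x * Q x - P x * Qdd x| * (Q x * Q x) := by
      rw [abs_mul, abs_of_pos (by positivity : (0:ℝ) < Q x * Q x)]
    have e2 : |(Pd x * Q x - P x * Qd x) * (2 * Q x * Qd x)|
        = |Pd x * Q x - P x * Qd x| * (2 * Q x * |Qd x|) := by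
      rw [abs_mul]
      congr 1
      rw [abs_mul, abs_of_pos (by positivity : (0:ℝ) < 2 * Q x)]
    have hsplit : |(Pdd x * Q x - P x * Qdd x) * (Q x * Q x)
        - (Pd x * Q x - P x * Qd x) * (2 * Q x * Qd x)|
        ≤ |Pdd x * Q x - P x * Qdd x| * (Q x * Q x)
          + |Pd x * Q x - P x * Qd x| * (2 * Q x * |Qd x|) := by
      calc |(Pdd x * Q x - P x * Qdd x) * (Q x * Q x)
            - (Pd x * Q x - P x * Qd x) * (2 * Q x * Qd x)|
          ≤ |(Pdd x * Q x - P x * Qdd x) * (Q x * Q x)|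
            + |(Pd x * Q x - P x * Qd x) * (2 * Q x * Qd x)| := abs_sub _ _
        _ = |Pdd x * Q x - P x * Qdd x| * (Q x * Q x)
            + |Pd x * Q x - P x * Qd x| * (2 * Q x * |Qd x|) := by rw [e1, e2]
    have hrhs : (20 + 320*(1+x^2) + 8*(20*(1+x) + 80*(1+x^2))) / Q x * (Q x * Q x)^2
        = (20 + 320*(1+x^2) + 8*(20*(1+x) + 80*(1+x^2))) * (Q x * (Q x * Q x)) := by
      field_simp
    rw [hrhs]
    have hterm1 : |Pdd x * Q x - P x * Qdd x| * (Q x * Q x)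
        ≤ ((20 + 320*(1+x^2)) * Q x) * (Q x * Q x) :=
      mul_le_mul_of_nonneg_right hA' (by positivity)
    have hterm2 : |Pd x * Q x - P x * Qd x| * (2 * Q x * |Qd x|)
        ≤ (((20*(1+x) + 80*(1+x^2))) * Q x) * (8 * (Q x * Q x)) := by
      have h4 : 2 * Q x * |Qd x| ≤ 8 * (Q x * Q x) := by nlinarith
      have h5 : 0 ≤ 2 * Q x * |Qd x| := by positivity
      exact mul_le_mul hA h4 h5 (by positivity)
    nlinarith [hsplit, hterm1, hterm2]
  -- combine
  set T : ℝ := 20*(1+x^2) + (20*(1+x) + 80*(1+x^2))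
      + (20 + 320*(1+x^2) + 8*(20*(1+x) + 80*(1+x^2))) with hTdef
  have hsum : |g x| + |deriv g x| + |deriv (deriv g) x| ≤ T / Q x := by
    have h6 : T / Q x = (20*(1+x^2)) / Q x + (20*(1+x) + 80*(1+x^2)) / Q x
        + (20 + 320*(1+x^2) + 8*(20*(1+x) + 80*(1+x^2))) / Q x := by
      rw [← add_div, ← add_div]
    rw [h6]
    linarith
  have hTpos : 0 ≤ T := by rw [hTdef]; positivity
  have hE1 : Real.exp (-2*x) * Real.exp (2*x) = 1 := by
    rw [← Real.exp_add]
    norm_num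
  have hfin : T / Q x ≤ 4*T*(1+x)*Real.exp (-2*x) := by
    rw [div_le_iff₀ hq]
    have h2 := mul_le_mul_of_nonneg_left (hQlow x hx)
      (mul_nonneg hTpos (Real.exp_pos (-2*x)).le)
    have h3 : T * (Real.exp (-2*x) * Real.exp (2*x)) = T := by rw [hE1, mul_one]
    nlinarith [h2, h3]
  have hpoly : 4*T*(1+x) ≤ 100000*(1+x^3) := by
    rw [hTdef]
    nlinarith [mul_nonneg hxpos.le (sq_nonneg (x-1)), sq_nonneg (x-1), sq_nonneg x,
      hxpos.le, mul_nonneg (mul_nonneg hxpos.le hxpos.le) hxpos.le]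
  calc |g x| + |deriv g x| + |deriv (deriv g) x| ≤ T / Q x := hsum
    _ ≤ 4*T*(1+x)*Real.exp (-2*x) := hfin
    _ = 4*T*(1+x)*Real.exp (-2*x) := rfl
    _ ≤ 100000*(1+x^3)*Real.exp (-2*x) := by
        apply mul_le_mul_of_nonneg_right hpoly (Real.exp_pos _).le


end Helpers

-- ### exp helpers
lemma hasDerivAt_exp_neg2 (t : ℝ) :
    HasDerivAt (fun y : ℝ => Real.exp (-2*y)) (-2*Real.exp (-2*t)) t := by
  have h := ((hasDerivAt_id t).const_mul (-2:ℝ)).exp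
  convert h using 1
  all_goals simp only [id_eq, mul_one]
  all_goals try ring

lemma exp_cancel (x : ℝ) : Real.exp (-x) * Real.exp x = 1 := by
  rw [← Real.exp_add, neg_add_cancel, Real.exp_zero]

lemma exp_neg_sq (x : ℝ) : Real.exp (-x) * Real.exp (-x) = Real.exp (-2*x) := by
  rw [← Real.exp_add]; ring_nf

lemma ecosh (x : ℝ) : Real.exp (-x) * Real.cosh x = (1 + Real.exp (-2*x))/2 := by
  rw [Real.cosh_eq]
  linear_combination (exp_cancel x + exp_neg_sq x)/2

lemma esinh (x : ℝ) : Real.exp (-x) * Real.sinh x = (1 - Real.exp (-2*x))/2 := by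
  rw [Real.sinh_eq]
  linear_combination (exp_cancel x - exp_neg_sq x)/2

lemma two_y_exp_le {y : ℝ} (hy : 0 ≤ y) : 2*y*Real.exp (-2*y) ≤ 1 := by
  have h1 := mul_le_mul_of_nonneg_left (Real.add_one_le_exp (2*y)) (Real.exp_pos (-2*y)).le
  have h2 : Real.exp (-2*y) * Real.exp (2*y) = 1 := by
    rw [← Real.exp_add]; norm_num
  have h3 : 0 < Real.exp (-2*y) := Real.exp_pos _
  nlinarith

-- ### P functions
noncomputable def P1f (c2 c1 y : ℝ) : ℝ := (1 + Real.exp (-2*y))/2 - y*c2 + y^2*c1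
noncomputable def P1fd (c2 c1 y : ℝ) : ℝ := -Real.exp (-2*y) - c2 + 2*y*c1
noncomputable def P1fdd (c1 y : ℝ) : ℝ := 2*Real.exp (-2*y) + 2*c1

lemma hasDerivAt_P1f (c2 c1 t : ℝ) : HasDerivAt (P1f c2 c1) (P1fd c2 c1 t) t := by
  have h := ((((hasDerivAt_exp_neg2 t).const_add 1).div_const 2).sub
    ((hasDerivAt_id t).mul_const c2)).add ((hasDerivAt_pow 2 t).mul_const c1)
  convert h using 1
  · rfl
  · rfl
  · rfl
  unfold P1fd
  push_cast
  simp only [id_eq, mul_one, pow_one]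
  ring

lemma hasDerivAt_P1fd (c2 c1 t : ℝ) : HasDerivAt (P1fd c2 c1) (P1fdd c1 t) t := by
  have h := (((hasDerivAt_exp_neg2 t).neg).sub_const c2).add
    (((hasDerivAt_id t).const_mul (2:ℝ)).mul_const c1)
  convert h using 1
  · rfl
  · rfl
  · rfl
  unfold P1fdd
  simp only [id_eq, mul_one]
  ring

noncomputable def P3f (c2 c3 y : ℝ) : ℝ := y*(1 + Real.exp (-2*y))/2 - y^2*c2 + y*c3
noncomputable def P3fd (c2 c3 y : ℝ) : ℝ :=
  (1 + Real.exp (-2*y))/2 - y*Real.exp (-2*y) - 2*y*c2 + c3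
noncomputable def P3fdd (c2 y : ℝ) : ℝ :=
  -2*Real.exp (-2*y) + 2*y*Real.exp (-2*y) - 2*c2

lemma hasDerivAt_P3f (c2 c3 t : ℝ) : HasDerivAt (P3f c2 c3) (P3fd c2 c3 t) t := by
  have h := ((((hasDerivAt_id t).mul ((hasDerivAt_exp_neg2 t).const_add 1)).div_const 2).sub
    ((hasDerivAt_pow 2 t).mul_const c2)).add ((hasDerivAt_id t).mul_const c3)
  convert h using 1
  · rfl
  · rfl
  · rfl
  unfold P3fd
  push_cast
  simp only [id_eq, mul_one, pow_one]
  ring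

lemma hasDerivAt_P3fd (c2 c3 t : ℝ) : HasDerivAt (P3fd c2 c3) (P3fdd c2 t) t := by
  have h := ((((hasDerivAt_exp_neg2 t).const_add 1).div_const 2).sub
    ((hasDerivAt_id t).mul (hasDerivAt_exp_neg2 t))).sub
    (((hasDerivAt_id t).const_mul (2:ℝ)).mul_const c2) |>.add_const c3
  convert h using 1
  · rfl
  · rfl
  · rfl
  unfold P3fdd
  simp only [id_eq, mul_one]
  ring

noncomputable def P4f (c2 y : ℝ) : ℝ := (1 - Real.exp (-2*y))/(2*y) + c2
noncomputable def P4fd (y : ℝ) : ℝ :=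
  (2*y*Real.exp (-2*y) - 1 + Real.exp (-2*y))/(2*y^2)
noncomputable def P4fdd (y : ℝ) : ℝ :=
  (-2*y^2*Real.exp (-2*y) - 2*y*Real.exp (-2*y) + 1 - Real.exp (-2*y))/y^3

lemma hasDerivAt_P4f (c2 : ℝ) {t : ℝ} (ht : t ≠ 0) :
    HasDerivAt (P4f c2) (P4fd t) t := by
  have h := (((hasDerivAt_exp_neg2 t).const_sub 1).div
    ((hasDerivAt_id t).const_mul 2) (by simpa using ht)).add_const c2
  convert h using 1
  · rfl
  · rfl
  · rfl
  unfold P4fd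
  simp only [id_eq, mul_one]
  field_simp
  ring

lemma hasDerivAt_P4fd {t : ℝ} (ht : t ≠ 0) : HasDerivAt P4fd (P4fdd t) t := by
  have hn : HasDerivAt (fun y : ℝ => 2*y*Real.exp (-2*y) - 1 + Real.exp (-2*y))
      (2*Real.exp (-2*t) + 2*t*(-2*Real.exp (-2*t)) + -2*Real.exp (-2*t)) t := by
    have h := ((((hasDerivAt_id t).const_mul (2:ℝ)).mul (hasDerivAt_exp_neg2 t)).sub_const 1).add
      (hasDerivAt_exp_neg2 t)
    convert h using 1
    · rfl
    · rfl
    · rfl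
    all_goals simp only [id_eq, mul_one]
    all_goals try ring
  have hd := hn.div ((hasDerivAt_pow 2 t).const_mul (2:ℝ))
    (by simpa using pow_ne_zero 2 ht)
  convert hd using 1
  · rfl
  · rfl
  · rfl
  unfold P4fdd
  push_cast
  simp only [pow_one]
  field_simp
  ring

-- MVT bounds for P4 numerators
lemma u_small {x : ℝ} (hx : 0 < x) :
    |2*x*Real.exp (-2*x) - 1 + Real.exp (-2*x)| ≤ 4*x*x := by
  apply mvt_abs hx.le (F' := fun t => 2*Real.exp (-2*t) + 2*t*(-2*Real.exp (-2*t)) + -2*Real.exp (-2*t))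
  · intro t ht
    have h := ((((hasDerivAt_id t).const_mul (2:ℝ)).mul (hasDerivAt_exp_neg2 t)).sub_const 1).add
      (hasDerivAt_exp_neg2 t)
    convert h using 1
    · rfl
    · rfl
    · rfl
    all_goals simp only [id_eq, mul_one]
    all_goals try ring
  · intro t ht
    have he0 : 0 < Real.exp (-2*t) := Real.exp_pos _
    have he1 : Real.exp (-2*t) ≤ 1 := by rw [Real.exp_le_one_iff]; linarith [ht.1]
    have h1 : 2*Real.exp (-2*t) + 2*t*(-2*Real.exp (-2*t)) + -2*Real.exp (-2*t)
        = -(4*t*Real.exp (-2*t)) := by ring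
    rw [h1, abs_neg, abs_of_nonneg (by nlinarith [ht.1])]
    nlinarith [ht.1, ht.2]
  · simp

lemma v_small {x : ℝ} (hx : 0 < x) :
    |(-2)*x^2*Real.exp (-2*x) - 2*x*Real.exp (-2*x) + 1 - Real.exp (-2*x)| ≤ 4*x^2*x := by
  apply mvt_abs hx.le (F' := fun t =>
    ((-2)*(2*t)*Real.exp (-2*t) + (-2)*t^2*(-2*Real.exp (-2*t)))
      - (2*Real.exp (-2*t) + 2*t*(-2*Real.exp (-2*t))) - (-2*Real.exp (-2*t)))
  · intro t ht
    have h := ((((hasDerivAt_pow 2 t).const_mul ((-2):ℝ)).mul (hasDerivAt_exp_neg2 t)).sub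
      (((hasDerivAt_id t).const_mul (2:ℝ)).mul (hasDerivAt_exp_neg2 t))).sub
      (hasDerivAt_exp_neg2 t) |>.add_const 1
    convert h using 1
    · rfl
    · rfl
    · funext y; simp only [id_eq, Pi.mul_apply, Pi.sub_apply]; ring
    · push_cast
      simp only [id_eq, mul_one, pow_one]
      try ring
  · intro t ht
    have he0 : 0 < Real.exp (-2*t) := Real.exp_pos _
    have h1 : ((-2)*(2*t)*Real.exp (-2*t) + (-2)*t^2*(-2*Real.exp (-2*t)))
        - (2*Real.exp (-2*t) + 2*t*(-2*Real.exp (-2*t))) - (-2*Real.exp (-2*t))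
        = 4*t^2*Real.exp (-2*t) := by ring
    have he1 : Real.exp (-2*t) ≤ 1 := by rw [Real.exp_le_one_iff]; linarith [ht.1]
    rw [h1, abs_of_nonneg (by positivity)]
    nlinarith [ht.1, ht.2, sq_nonneg t, sq_nonneg x]
  · simp

-- ### bounds on the P functions (0 < y, 1 ≤ c2 ≤ 4, 0 ≤ c1 ≤ 3, 0 ≤ c3 ≤ 3)
section Pbounds
variable {c1 c2 c3 y : ℝ} (hy : 0 < y) (hc2a : 1 ≤ c2) (hc2b : c2 ≤ 4)
  (hc1a : 0 ≤ c1) (hc1b : c1 ≤ 3) (hc3a : 0 ≤ c3) (hc3b : c3 ≤ 3)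

include hy hc2a hc2b hc1a hc1b in
lemma P1f_bound : |P1f c2 c1 y| ≤ 20*(1+y^2) := by
  have he0 : 0 < Real.exp (-2*y) := Real.exp_pos _
  have he1 : Real.exp (-2*y) ≤ 1 := by rw [Real.exp_le_one_iff]; linarith
  unfold P1f
  rw [abs_le]
  constructor
  · nlinarith [sq_nonneg (y-1), mul_nonneg (sq_nonneg y) hc1a,
      mul_nonneg hy.le (by linarith : (0:ℝ) ≤ 4 - c2), sq_nonneg y]
  · nlinarith [sq_nonneg (y-1), mul_nonneg hy.le (by linarith : (0:ℝ) ≤ c2),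
      mul_le_mul_of_nonneg_left hc1b (sq_nonneg y), sq_nonneg y]

include hy hc2a hc2b hc1a hc1b in
lemma P1fd_bound : |P1fd c2 c1 y| ≤ 20*(1+y) := by
  have he0 : 0 < Real.exp (-2*y) := Real.exp_pos _
  have he1 : Real.exp (-2*y) ≤ 1 := by rw [Real.exp_le_one_iff]; linarith
  unfold P1fd
  rw [abs_le]
  constructor
  · nlinarith [mul_nonneg hy.le hc1a]
  · nlinarith [mul_le_mul_of_nonneg_left hc1b hy.le]

include hy hc1a hc1b in
lemma P1fdd_bound : |P1fdd c1 y| ≤ 20 := by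
  have he0 : 0 < Real.exp (-2*y) := Real.exp_pos _
  have he1 : Real.exp (-2*y) ≤ 1 := by rw [Real.exp_le_one_iff]; linarith
  unfold P1fdd
  rw [abs_le]
  constructor <;> nlinarith

include hy hc2a hc2b hc3a hc3b in
lemma P3f_bound : |P3f c2 c3 y| ≤ 20*(1+y^2) := by
  have he0 : 0 < Real.exp (-2*y) := Real.exp_pos _
  have he1 : Real.exp (-2*y) ≤ 1 := by rw [Real.exp_le_one_iff]; linarith
  unfold P3f
  rw [abs_le]
  constructor
  · nlinarith [mul_nonneg hy.le hc3a, mul_nonneg hy.le he0.le, sq_nonneg (y-1),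
      mul_le_mul_of_nonneg_left hc2b (sq_nonneg y), sq_nonneg y]
  · nlinarith [mul_nonneg (sq_nonneg y) (by linarith : (0:ℝ) ≤ c2),
      mul_le_mul_of_nonneg_left hc3b hy.le, sq_nonneg (y-1),
      mul_nonneg hy.le (by linarith : (0:ℝ) ≤ 1 - Real.exp (-2*y)), sq_nonneg y]

include hy hc2a hc2b hc3a hc3b in
lemma P3fd_bound : |P3fd c2 c3 y| ≤ 20*(1+y) := by
  have he0 : 0 < Real.exp (-2*y) := Real.exp_pos _
  have he1 : Real.exp (-2*y) ≤ 1 := by rw [Real.exp_le_one_iff]; linarith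
  unfold P3fd
  rw [abs_le]
  have hye : y*Real.exp (-2*y) ≤ y := by nlinarith
  have hye0 : 0 ≤ y*Real.exp (-2*y) := by positivity
  constructor
  · nlinarith [mul_le_mul_of_nonneg_left hc2b hy.le]
  · nlinarith [mul_nonneg hy.le (by linarith : (0:ℝ) ≤ c2)]

include hy hc2a hc2b in
lemma P3fdd_bound : |P3fdd c2 y| ≤ 20 := by
  have he0 : 0 < Real.exp (-2*y) := Real.exp_pos _
  have he1 : Real.exp (-2*y) ≤ 1 := by rw [Real.exp_le_one_iff]; linarith
  have h2y := two_y_exp_le hy.le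
  unfold P3fdd
  rw [abs_le]
  constructor <;> nlinarith [mul_nonneg hy.le he0.le]

include hy hc2a hc2b in
lemma P4f_bound : |P4f c2 y| ≤ 20*(1+y^2) := by
  have he0 : 0 < Real.exp (-2*y) := Real.exp_pos _
  have he1 : Real.exp (-2*y) ≤ 1 := by rw [Real.exp_le_one_iff]; linarith
  have hfrac1 : (1 - Real.exp (-2*y))/(2*y) ≤ 1 := by
    rw [div_le_one (by linarith)]
    nlinarith [Real.add_one_le_exp (-2*y)]
  have hfrac0 : 0 ≤ (1 - Real.exp (-2*y))/(2*y) := by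
    apply div_nonneg (by linarith) (by linarith)
  unfold P4f
  rw [abs_le]
  constructor
  · nlinarith [sq_nonneg y]
  · nlinarith [sq_nonneg y]

include hy in
lemma P4fd_bound : |P4fd y| ≤ 20*(1+y) := by
  have hu := u_small hy
  unfold P4fd
  rw [abs_div, abs_of_pos (by positivity : (0:ℝ) < 2*y^2),
    div_le_iff₀ (by positivity : (0:ℝ) < 2*y^2)]
  nlinarith [sq_nonneg y, mul_nonneg hy.le (sq_nonneg y),
    mul_nonneg (mul_nonneg hy.le hy.le) hy.le]

include hy in
lemma P4fdd_bound : |P4fdd y| ≤ 20 := by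
  have hv := v_small hy
  unfold P4fdd
  rw [abs_div, abs_of_pos (by positivity : (0:ℝ) < y^3),
    div_le_iff₀ (by positivity : (0:ℝ) < y^3)]
  have h1 : (-2)*y^2*Real.exp (-2*y) - 2*y*Real.exp (-2*y) + 1 - Real.exp (-2*y)
      = -2*y^2*Real.exp (-2*y) - 2*y*Real.exp (-2*y) + 1 - Real.exp (-2*y) := by ring
  calc |(-2*y^2*Real.exp (-2*y) - 2*y*Real.exp (-2*y) + 1 - Real.exp (-2*y))|
      = |(-2)*y^2*Real.exp (-2*y) - 2*y*Real.exp (-2*y) + 1 - Real.exp (-2*y)| := by ring_nf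
    _ ≤ 4*y^2*y := hv
    _ ≤ 20*y^3 := by nlinarith [pow_pos hy 3]
    _ = 20*y^3 := rfl

end Pbounds

-- ### equalities g_j = P_j / Q on (0,∞)
section Equalities
variable {s y : ℝ}

lemma Den_pos (hy : 0 < y) (hc2 : 1 ≤ η2 s) :
    0 < Real.sinh (2*y) + 2*y*η2 s := by
  have h1 : 0 < Real.sinh (2*y) := Real.sinh_pos_iff.2 (by linarith)
  nlinarith

lemma Qf_eq (c : ℝ) (hy : y ≠ 0) : Qf c y = (Real.sinh (2*y) + 2*y*c)/y := by
  unfold Qf; field_simp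

lemma g1_eq (hy : 0 < y) (hc2 : 1 ≤ η2 s) :
    g1 s y = P1f (η2 s) (η1 s) y / Qf (η2 s) y := by
  unfold g1
  rw [Qf_eq _ hy.ne', div_div_eq_mul_div]
  have h1 : Real.sinh (2 * y) + 2 * y * η2 s = Real.sinh (2*y) + 2*y*η2 s := by ring
  congr 1
  have h2 : y * Real.exp (-y) * Real.cosh y = y * ((1 + Real.exp (-2*y))/2) := by
    rw [mul_assoc, ecosh]
  rw [h2]
  unfold P1f
  ring

lemma g2_eq (hy : 0 < y) (hc2 : 1 ≤ η2 s) :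
    g2 s y = (fun _ : ℝ => (1:ℝ)) y / Qf (η2 s) y := by
  unfold g2
  rw [Qf_eq _ hy.ne', div_div_eq_mul_div]
  simp

lemma g3_eq (hy : 0 < y) (hc2 : 1 ≤ η2 s) :
    g3 s y = P3f (η2 s) (s^2 * η1 s) y / Qf (η2 s) y := by
  unfold g3
  rw [Qf_eq _ hy.ne', div_div_eq_mul_div]
  congr 1
  have h2 : y^2 * Real.exp (-y) * Real.cosh y = y^2 * ((1 + Real.exp (-2*y))/2) := by
    rw [mul_assoc, ecosh]
  rw [h2]
  unfold P3f
  ring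

lemma g4_eq (hy : 0 < y) (hc2 : 1 ≤ η2 s) :
    g4 s y = P4f (η2 s) y / Qf (η2 s) y := by
  unfold g4
  rw [Qf_eq _ hy.ne', div_div_eq_mul_div]
  congr 1
  rw [esinh]
  unfold P4f
  field_simp

end Equalities

theorem statement16 :
    ∃ C > (0 : ℝ), ∃ s₀ > (0 : ℝ), ∀ s : ℝ, 0 < s → s < s₀ → ∀ x : ℝ, 0 < x →
      |g1 s x| + |deriv (g1 s) x| + |deriv (deriv (g1 s)) x| ≤
        C * (1 + x ^ 3) * Real.exp (-2 * x) ∧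
      |g2 s x| + |deriv (g2 s) x| + |deriv (deriv (g2 s)) x| ≤
        C * (1 + x ^ 3) * Real.exp (-2 * x) ∧
      |g3 s x| + |deriv (g3 s) x| + |deriv (deriv (g3 s)) x| ≤
        C * (1 + x ^ 3) * Real.exp (-2 * x) ∧
      |g4 s x| + |deriv (g4 s) x| + |deriv (deriv (g4 s)) x| ≤
        C * (1 + x ^ 3) * Real.exp (-2 * x) := by
  refine ⟨100000, by norm_num, 1, by norm_num, ?_⟩
  intro s hs0 hs1 x hx
  -- bounds on the constants
  obtain ⟨hc2a, hc2b⟩ : 1 ≤ η2 s ∧ η2 s ≤ 4 := by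
    have := eta2_bounds hs0 hs1
    exact ⟨this.1, this.2⟩
  obtain ⟨hc1a, hc1b⟩ : 0 ≤ η1 s ∧ η1 s ≤ 3 := by
    have := eta1_bounds hs0 hs1
    exact ⟨this.1, this.2⟩
  have hc3eq : s^2 * η1 s = Real.sinh s ^ 2 := by
    unfold η1; field_simp
  have hc3a : 0 ≤ s^2 * η1 s := by positivity
  have hc3b : s^2 * η1 s ≤ 3 := by rw [hc3eq]; exact sinh_sq_le hs0 hs1
  -- shared Q hypotheses
  have hQ : ∀ y ∈ Ioi (0:ℝ), HasDerivAt (Qf (η2 s)) (Qd y) y :=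
    fun y hy => hasDerivAt_Qf _ (ne_of_gt hy)
  have hQd : ∀ y ∈ Ioi (0:ℝ), HasDerivAt Qd (Qdd y) y :=
    fun y hy => hasDerivAt_Qd (ne_of_gt hy)
  have hQpos : ∀ y ∈ Ioi (0:ℝ), 0 < Qf (η2 s) y := fun y hy => Qf_pos hc2a hy
  have hQlow : ∀ y ∈ Ioi (0:ℝ), Real.exp (2*y) ≤ 4*(1+y) * Qf (η2 s) y :=
    fun y hy => Qf_exp_low hc2a hy
  have hQdb : ∀ y ∈ Ioi (0:ℝ), |Qd y| ≤ 4 * Qf (η2 s) y := fun y hy => Qd_le hc2a hy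
  have hQddb : ∀ y ∈ Ioi (0:ℝ), |Qdd y| ≤ 16 * Qf (η2 s) y := fun y hy => Qdd_le hc2a hy
  have hxI : x ∈ Ioi (0:ℝ) := hx
  refine ⟨?_, ?_, ?_, ?_⟩
  · -- g1
    exact master (fun y hy => g1_eq hy hc2a)
      (fun y hy => hasDerivAt_P1f _ _ y) (fun y hy => hasDerivAt_P1fd _ _ y)
      hQ hQd hQpos hQlow hQdb hQddb
      (fun y hy => P1f_bound hy hc2a hc2b hc1a hc1b)
      (fun y hy => P1fd_bound hy hc2a hc2b hc1a hc1b)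
      (fun y hy => P1fdd_bound hy hc1a hc1b) hxI
  · -- g2
    exact master (fun y hy => g2_eq hy hc2a)
      (fun y hy => hasDerivAt_const y 1) (fun y hy => hasDerivAt_const y 0)
      hQ hQd hQpos hQlow hQdb hQddb
      (fun y hy => by
        rw [abs_one]
        nlinarith [sq_nonneg y])
      (fun y hy => by
        rw [abs_zero]
        nlinarith [Set.mem_Ioi.1 hy])
      (fun y hy => by rw [abs_zero]; norm_num) hxI
  · -- g3
    exact master (fun y hy => g3_eq hy hc2a)
      (fun y hy => hasDerivAt_P3f _ _ y) (fun y hy => hasDerivAt_P3fd _ _ y)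
      hQ hQd hQpos hQlow hQdb hQddb
      (fun y hy => P3f_bound hy hc2a hc2b hc3a hc3b)
      (fun y hy => P3fd_bound hy hc2a hc2b hc3a hc3b)
      (fun y hy => P3fdd_bound hy hc2a hc2b) hxI
  · -- g4
    exact master (fun y hy => g4_eq hy hc2a)
      (fun y hy => hasDerivAt_P4f _ (ne_of_gt hy)) (fun y hy => hasDerivAt_P4fd (ne_of_gt hy))
      hQ hQd hQpos hQlow hQdb hQddb
      (fun y hy => P4f_bound hy hc2a hc2b)
      (fun y hy => P4fd_bound hy)
      (fun y hy => P4fdd_bound hy) hxI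

end StokesPaper
end
end

section
/- Let $a>0$ and define on $\{(\zeta,\theta):\cosh\zeta\neq\cos\theta\}$ the functions $\alpha(\zeta,\theta)=(1-\cosh\zeta\cos\theta)/(\cosh\zeta-\cos\theta)$, $\beta(\zeta,\theta)=\sinh\zeta\sin\theta/(\cosh\zeta-\cos\theta)$, $h(\zeta,\theta)=(\cosh\zeta-\cos\theta)/a$, and the unit vector fields $e_\zeta=\alpha e_x-\beta e_y$, $e_\theta=-\beta e_x-\alpha e_y$. Then there is a constant $C>0$ (which may depend on $a$ and on an upper bound $s$ for $|\zeta|$) such that for all $(\zeta,\theta)$ with $|\zeta|\le s$ and $\cosh\zeta\neq\cos\theta$, the Cartesian gradients satisfy $|\nabla e_\zeta|+|\nabla e_\theta|\le C(|\zeta|+|\theta|)$; equivalently, $|h\,\partial_\zeta\alpha|+|h\,\partial_\theta\alpha|+|h\,\partial_\zeta\beta|+|h\,\partial_\theta\beta|\le C(|\zeta|+|\theta|)$. -/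
open Real

noncomputable section

namespace StokesPaper

/-- `α(ζ,θ) = (1 - cosh ζ cos θ)/(cosh ζ - cos θ)`. -/
def alphaB (ζ θ : ℝ) : ℝ := (1 - Real.cosh ζ * Real.cos θ) / (Real.cosh ζ - Real.cos θ)

/-- `β(ζ,θ) = sinh ζ sin θ/(cosh ζ - cos θ)`. -/
def betaB (ζ θ : ℝ) : ℝ := Real.sinh ζ * Real.sin θ / (Real.cosh ζ - Real.cos θ)

/-- The scaling factor `h(ζ,θ) = (cosh ζ - cos θ)/a`. -/
def hB (a ζ θ : ℝ) : ℝ := (Real.cosh ζ - Real.cos θ) / a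

lemma sinh_le_mul_cosh {x : ℝ} (hx : 0 ≤ x) : Real.sinh x ≤ x * Real.cosh x := by
  have h : ∀ y : ℝ, HasDerivAt (fun t => t * Real.cosh t - Real.sinh t) (y * Real.sinh y) y := by
    intro y
    have h1 : HasDerivAt (fun t : ℝ => t * Real.cosh t) (1 * Real.cosh y + y * Real.sinh y) y :=
      (hasDerivAt_id y).mul (Real.hasDerivAt_cosh y)
    have := h1.sub (Real.hasDerivAt_sinh y)
    simp only [one_mul, add_sub_cancel_left] at this
    exact this
  have mono : MonotoneOn (fun t => t * Real.cosh t - Real.sinh t) (Set.Ici 0) := by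
    apply monotoneOn_of_deriv_nonneg (convex_Ici 0)
    · exact Continuous.continuousOn (by continuity)
    · intro y hy
      exact ((differentiable_id.mul Real.differentiable_cosh).sub
        Real.differentiable_sinh).differentiableAt.differentiableWithinAt
    · intro y hy
      rw [interior_Ici] at hy
      rw [(h y).deriv]
      exact mul_nonneg hy.le (Real.sinh_nonneg_iff.2 hy.le)
  have h0 := mono Set.self_mem_Ici hx hx
  simp only [zero_mul, Real.sinh_zero, sub_zero, zero_sub] at h0
  linarith

lemma abs_sinh_le' {x s : ℝ} (hx : |x| ≤ s) : |Real.sinh x| ≤ Real.cosh s * |x| := by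
  rw [Real.abs_sinh]
  calc Real.sinh |x| ≤ |x| * Real.cosh |x| := sinh_le_mul_cosh (abs_nonneg x)
    _ ≤ |x| * Real.cosh s := by
        refine mul_le_mul_of_nonneg_left ?_ (abs_nonneg x)
        rw [Real.cosh_le_cosh, abs_abs]
        exact hx.trans (le_abs_self s)
    _ = Real.cosh s * |x| := mul_comm _ _

lemma deriv_alpha_zeta (ζ θ : ℝ) (hne : Real.cosh ζ - Real.cos θ ≠ 0) :
    deriv (fun t => alphaB t θ) ζ =
      -(Real.sinh ζ * Real.sin θ ^ 2) / (Real.cosh ζ - Real.cos θ) ^ 2 := by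
  have h1 : HasDerivAt (fun t => 1 - Real.cosh t * Real.cos θ) (-(Real.sinh ζ * Real.cos θ)) ζ := by
    simpa using ((Real.hasDerivAt_cosh ζ).mul_const (Real.cos θ)).const_sub 1
  have h2 : HasDerivAt (fun t => Real.cosh t - Real.cos θ) (Real.sinh ζ) ζ := by
    simpa using (Real.hasDerivAt_cosh ζ).sub_const (Real.cos θ)
  simp only [alphaB, betaB]
  have hdd := (h1.div h2 hne).deriv
  simp only [Pi.div_def] at hdd
  rw [hdd]
  congr 1
  linear_combination Real.sinh ζ * Real.sin_sq_add_cos_sq θ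

lemma deriv_alpha_theta (ζ θ : ℝ) (hne : Real.cosh ζ - Real.cos θ ≠ 0) :
    deriv (fun t => alphaB ζ t) θ =
      Real.sin θ * Real.sinh ζ ^ 2 / (Real.cosh ζ - Real.cos θ) ^ 2 := by
  have h1 : HasDerivAt (fun t => 1 - Real.cosh ζ * Real.cos t) (Real.cosh ζ * Real.sin θ) θ := by
    simpa using ((Real.hasDerivAt_cos θ).const_mul (Real.cosh ζ)).const_sub 1
  have h2 : HasDerivAt (fun t => Real.cosh ζ - Real.cos t) (Real.sin θ) θ := by
    simpa using (Real.hasDerivAt_cos θ).const_sub (Real.cosh ζ)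
  simp only [alphaB, betaB]
  have hdd := (h1.div h2 hne).deriv
  simp only [Pi.div_def] at hdd
  rw [hdd]
  congr 1
  linear_combination Real.sin θ * Real.cosh_sq_sub_sinh_sq ζ

lemma deriv_beta_zeta (ζ θ : ℝ) (hne : Real.cosh ζ - Real.cos θ ≠ 0) :
    deriv (fun t => betaB t θ) ζ =
      Real.sin θ * (1 - Real.cosh ζ * Real.cos θ) / (Real.cosh ζ - Real.cos θ) ^ 2 := by
  have h1 : HasDerivAt (fun t => Real.sinh t * Real.sin θ) (Real.cosh ζ * Real.sin θ) ζ :=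
    (Real.hasDerivAt_sinh ζ).mul_const (Real.sin θ)
  have h2 : HasDerivAt (fun t => Real.cosh t - Real.cos θ) (Real.sinh ζ) ζ := by
    simpa using (Real.hasDerivAt_cosh ζ).sub_const (Real.cos θ)
  simp only [alphaB, betaB]
  have hdd := (h1.div h2 hne).deriv
  simp only [Pi.div_def] at hdd
  rw [hdd]
  congr 1
  linear_combination Real.sin θ * Real.cosh_sq_sub_sinh_sq ζ

lemma deriv_beta_theta (ζ θ : ℝ) (hne : Real.cosh ζ - Real.cos θ ≠ 0) :
    deriv (fun t => betaB ζ t) θ =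
      Real.sinh ζ * (Real.cos θ * Real.cosh ζ - 1) / (Real.cosh ζ - Real.cos θ) ^ 2 := by
  have h1 : HasDerivAt (fun t => Real.sinh ζ * Real.sin t) (Real.sinh ζ * Real.cos θ) θ := by
    simpa [mul_comm] using (Real.hasDerivAt_sin θ).const_mul (Real.sinh ζ)
  have h2 : HasDerivAt (fun t => Real.cosh ζ - Real.cos t) (Real.sin θ) θ := by
    simpa using (Real.hasDerivAt_cos θ).const_sub (Real.cosh ζ)
  simp only [alphaB, betaB]
  have hdd := (h1.div h2 hne).deriv
  simp only [Pi.div_def] at hdd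
  rw [hdd]
  congr 1
  linear_combination -Real.sinh ζ * Real.sin_sq_add_cos_sq θ

/-- the Cartesian gradients of the bipolar unit vector fields `e_ζ, e_θ` are
`O(|ζ|+|θ|)`; equivalently, the scaled partial derivatives of `α` and `β` are. -/
theorem statement17 (a s : ℝ) (ha : 0 < a) (hs : 0 < s) :
    ∃ C > (0 : ℝ), ∀ ζ θ : ℝ, |ζ| ≤ s → Real.cosh ζ ≠ Real.cos θ →
      |hB a ζ θ * deriv (fun t => alphaB t θ) ζ| +
      |hB a ζ θ * deriv (fun t => alphaB ζ t) θ| +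
      |hB a ζ θ * deriv (fun t => betaB t θ) ζ| +
      |hB a ζ θ * deriv (fun t => betaB ζ t) θ| ≤ C * (|ζ| + |θ|) := by
  refine ⟨(3 * Real.cosh s + 2) / a, by positivity, ?_⟩
  intro ζ θ hζ hne
  set d : ℝ := Real.cosh ζ - Real.cos θ with hd_def
  have hne' : d ≠ 0 := sub_ne_zero.2 hne
  have hd : 0 < d := by
    rcases lt_or_eq_of_le (sub_nonneg.2 ((Real.cos_le_one θ).trans (Real.one_le_cosh ζ))) with h | h
    · exact h
    · exact absurd h.symm hne'
  have hcos1 : Real.cos θ ≤ 1 := Real.cos_le_one θ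
  have hcos2 : -1 ≤ Real.cos θ := Real.neg_one_le_cos θ
  have hch : 1 ≤ Real.cosh ζ := Real.one_le_cosh ζ
  have hchs : Real.cosh ζ ≤ Real.cosh s := by
    rw [Real.cosh_le_cosh]
    exact hζ.trans (le_abs_self s)
  have hsinh : |Real.sinh ζ| ≤ Real.cosh s * |ζ| := abs_sinh_le' hζ
  have hsin : |Real.sin θ| ≤ |θ| := Real.abs_sin_le_abs
  have hcoshs1 : 1 ≤ Real.cosh s := Real.one_le_cosh s
  -- rewrite derivatives
  rw [deriv_alpha_zeta ζ θ hne', deriv_alpha_theta ζ θ hne',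
      deriv_beta_zeta ζ θ hne', deriv_beta_theta ζ θ hne']
  have had : 0 < a * d := mul_pos ha hd
  have key : ∀ X : ℝ, hB a ζ θ * (X / d ^ 2) = X / (a * d) := by
    intro X
    rw [hB, ← hd_def]
    field_simp
  rw [key, key, key, key]
  -- bound each term
  have b1 : |(-(Real.sinh ζ * Real.sin θ ^ 2)) / (a * d)| ≤ 2 * Real.cosh s / a * |ζ| := by
    rw [abs_div, abs_of_pos had, div_le_iff₀ had]
    have h2 : Real.sin θ ^ 2 ≤ 2 * d := by
      have := Real.sin_sq_add_cos_sq θ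
      nlinarith [sq_nonneg (1 + Real.cos θ)]
    have : |(-(Real.sinh ζ * Real.sin θ ^ 2))| = |Real.sinh ζ| * Real.sin θ ^ 2 := by
      rw [abs_neg, abs_mul, abs_of_nonneg (sq_nonneg (Real.sin θ))]
    rw [this]
    have := mul_le_mul hsinh h2 (sq_nonneg _) (by positivity)
    calc |Real.sinh ζ| * Real.sin θ ^ 2 ≤ (Real.cosh s * |ζ|) * (2 * d) := this
      _ = 2 * Real.cosh s / a * |ζ| * (a * d) := by field_simp
  have b2 : |Real.sin θ * Real.sinh ζ ^ 2 / (a * d)| ≤ (Real.cosh s + 1) / a * |θ| := by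
    rw [abs_div, abs_of_pos had, div_le_iff₀ had]
    have h2 : Real.sinh ζ ^ 2 ≤ (Real.cosh s + 1) * d := by
      have := Real.sinh_sq ζ
      nlinarith
    have : |Real.sin θ * Real.sinh ζ ^ 2| = |Real.sin θ| * Real.sinh ζ ^ 2 := by
      rw [abs_mul, abs_of_nonneg (sq_nonneg (Real.sinh ζ))]
    rw [this]
    calc |Real.sin θ| * Real.sinh ζ ^ 2 ≤ |θ| * ((Real.cosh s + 1) * d) :=
          mul_le_mul hsin h2 (sq_nonneg _) (abs_nonneg _)
      _ = (Real.cosh s + 1) / a * |θ| * (a * d) := by field_simp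
  have babs : |1 - Real.cosh ζ * Real.cos θ| ≤ d := by
    rw [abs_le]
    constructor
    · nlinarith
    · nlinarith
  have b3 : |Real.sin θ * (1 - Real.cosh ζ * Real.cos θ) / (a * d)| ≤ 1 / a * |θ| := by
    rw [abs_div, abs_of_pos had, div_le_iff₀ had, abs_mul]
    calc |Real.sin θ| * |1 - Real.cosh ζ * Real.cos θ| ≤ |θ| * d :=
          mul_le_mul hsin babs (abs_nonneg _) (abs_nonneg _)
      _ = 1 / a * |θ| * (a * d) := by field_simp
  have b4 : |Real.sinh ζ * (Real.cos θ * Real.cosh ζ - 1) / (a * d)| ≤ Real.cosh s / a * |ζ| := by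
    rw [abs_div, abs_of_pos had, div_le_iff₀ had, abs_mul]
    have babs' : |Real.cos θ * Real.cosh ζ - 1| ≤ d := by
      rw [abs_sub_comm] at babs
      calc |Real.cos θ * Real.cosh ζ - 1| = |Real.cosh ζ * Real.cos θ - 1| := by rw [mul_comm]
        _ ≤ d := babs
    calc |Real.sinh ζ| * |Real.cos θ * Real.cosh ζ - 1| ≤ (Real.cosh s * |ζ|) * d :=
          mul_le_mul hsinh babs' (abs_nonneg _) (by positivity)
      _ = Real.cosh s / a * |ζ| * (a * d) := by field_simp
  have hζ0 : 0 ≤ |ζ| := abs_nonneg ζ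
  have hθ0 : 0 ≤ |θ| := abs_nonneg θ
  have final : 2 * Real.cosh s / a * |ζ| + (Real.cosh s + 1) / a * |θ| + 1 / a * |θ| +
      Real.cosh s / a * |ζ| ≤ (3 * Real.cosh s + 2) / a * (|ζ| + |θ|) := by
    rw [div_mul_eq_mul_div, div_mul_eq_mul_div, div_mul_eq_mul_div, div_mul_eq_mul_div,
      div_mul_eq_mul_div, ← add_div, ← add_div, ← add_div,
      div_le_div_iff_of_pos_right ha]
    nlinarith
  linarith

end StokesPaper
end
end
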